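/- arXiv:2003.13477 — 3 statements merged into one kernel-verified Lean document; each statement's English description precedes it below -/
import Mathlib

section
/- Let $\{T(t) : t \ge 0\}$ be an a.s. bounded $C_0$-semigroup on a complete $RN$ module $S$ with generator $(A,D(A))$. Then for all $x \in D(A)$ and $r > 0$: $\frac{d}{dt}T(t)x = AT(t)x = T(t)Ax$ and $T(r)x - x = \int_0^r T(s)Ax\,ds = \int_0^r AT(s)x\,ds$. -/
/- Preamble: random normed modules over `L⁰(𝓕,K)`, the `(ε,λ)`-topology,
`C₀`-semigroups of continuous module homomorphisms and resolvents. -/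

open MeasureTheory MeasureTheory.AEEqFun Filter Set
noncomputable section

namespace MeasureTheory.AEEqFun
variable {α : Type*} [MeasurableSpace α] {μ : Measure α}
variable {γ : Type*} [TopologicalSpace γ] [CommRing γ] [IsTopologicalRing γ]

noncomputable instance instNatCast' : NatCast (α →ₘ[μ] γ) := ⟨fun n => const α (n : γ)⟩
noncomputable instance instIntCast' : IntCast (α →ₘ[μ] γ) := ⟨fun n => const α (n : γ)⟩

/-- `L⁰(𝓕,K)` is a commutative ring under the pointwise operations. -/
noncomputable instance instCommRing' : CommRing (α →ₘ[μ] γ) :=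
  toGerm_injective.commRing toGerm zero_toGerm one_toGerm add_toGerm mul_toGerm
    neg_toGerm sub_toGerm (fun n x => smul_toGerm n x) (fun n x => smul_toGerm n x)
    pow_toGerm (fun _ => rfl) (fun _ => rfl)
end MeasureTheory.AEEqFun

namespace RNTheory

variable {Ω : Type*} [MeasurableSpace Ω] {μ : Measure Ω}

/-- The pointwise absolute value `|ξ| ∈ L⁰₊(𝓕)` of `ξ ∈ L⁰(𝓕,K)`. -/
def l0abs {K : Type*} [RCLike K] (ξ : Ω →ₘ[μ] K) : Ω →ₘ[μ] ℝ :=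
  ξ.comp (fun a => ‖a‖) continuous_norm

/-- Pointwise exponential on `L⁰(𝓕,ℝ)`. -/
def l0exp (ξ : Ω →ₘ[μ] ℝ) : Ω →ₘ[μ] ℝ := ξ.comp Real.exp Real.continuous_exp

/-- Pointwise real part on `L⁰(𝓕,ℂ)`. -/
def l0re (ξ : Ω →ₘ[μ] ℂ) : Ω →ₘ[μ] ℝ := ξ.comp Complex.re Complex.continuous_re

/-- The embedding of `L⁰(𝓕,ℝ)` into `L⁰(𝓕,K)`. -/
def l0ofReal (K : Type*) [RCLike K] (ξ : Ω →ₘ[μ] ℝ) : Ω →ₘ[μ] K :=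
  ξ.comp (fun r => (RCLike.ofReal r : K)) RCLike.continuous_ofReal

/-- The constant element of `L⁰(𝓕,K)` given by the real number `t`. -/
def rconst (K : Type*) [RCLike K] (μ : Measure Ω) (t : ℝ) : Ω →ₘ[μ] K :=
  AEEqFun.const Ω ((RCLike.ofReal t : K))

/-- `ξ ∈ L⁰₊₊(𝓕)`, i.e. `ξ > 0` on `Ω`. -/
def L0pos (ξ : Ω →ₘ[μ] ℝ) : Prop := ∀ᵐ ω ∂μ, 0 < ξ ω

section Top

variable {S : Type*} [AddCommGroup S]

/-- The `(ε,λ)`-neighborhood of `x₀`: all `y` with `P(‖y - x₀‖ < ε) > 1 - λ`. -/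
def Nset (nrm : S → Ω →ₘ[μ] ℝ) (x₀ : S) (ε lam : ℝ) : Set S :=
  {y | 1 - lam < (μ {ω | nrm (y - x₀) ω < ε}).toReal}

theorem Nset_mono [IsFiniteMeasure μ] (nrm : S → Ω →ₘ[μ] ℝ) (x₀ : S) {ε₁ ε₂ lam₁ lam₂ : ℝ}
    (hε : ε₁ ≤ ε₂) (hlam : lam₁ ≤ lam₂) : Nset nrm x₀ ε₁ lam₁ ⊆ Nset nrm x₀ ε₂ lam₂ := by
  intro y hy
  have h1 : (μ {ω | nrm (y - x₀) ω < ε₁}).toReal ≤ (μ {ω | nrm (y - x₀) ω < ε₂}).toReal :=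
    ENNReal.toReal_mono (measure_ne_top μ _) (measure_mono (fun ω h => lt_of_lt_of_le h hε))
  exact lt_of_le_of_lt (by linarith) (lt_of_lt_of_le hy h1)

/-- The `(ε,λ)`-topology on an `RN` module. -/
def elTop [IsFiniteMeasure μ] (nrm : S → Ω →ₘ[μ] ℝ) : TopologicalSpace S where
  IsOpen U := ∀ x ∈ U, ∃ ε > (0:ℝ), ∃ lam : ℝ, 0 < lam ∧ lam < 1 ∧ Nset nrm x ε lam ⊆ U
  isOpen_univ := fun _ _ => ⟨1, one_pos, 1/2, by norm_num, by norm_num, fun _ _ => trivial⟩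
  isOpen_inter := by
    intro U V hU hV x hx
    obtain ⟨ε₁, hε₁, l₁, hl₁, hl₁', hN₁⟩ := hU x hx.1
    obtain ⟨ε₂, hε₂, l₂, hl₂, hl₂', hN₂⟩ := hV x hx.2
    refine ⟨min ε₁ ε₂, lt_min hε₁ hε₂, min l₁ l₂, lt_min hl₁ hl₂,
      lt_of_le_of_lt (min_le_left _ _) hl₁', fun y hy => ⟨?_, ?_⟩⟩
    · exact hN₁ (Nset_mono nrm x (min_le_left _ _) (min_le_left _ _) hy)
    · exact hN₂ (Nset_mono nrm x (min_le_right _ _) (min_le_right _ _) hy)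
  isOpen_sUnion := by
    intro s hs x hx
    obtain ⟨U, hUs, hxU⟩ := hx
    obtain ⟨ε, hε, lam, h1, h2, hN⟩ := hs U hUs x hxU
    exact ⟨ε, hε, lam, h1, h2, fun y hy => ⟨U, hUs, hN hy⟩⟩

/-- A sequence in an `RN` module is Cauchy (in probability). -/
def IsCauchyRN (nrm : S → Ω →ₘ[μ] ℝ) (x : ℕ → S) : Prop :=
  ∀ ε : ℝ, 0 < ε → ∃ N : ℕ, ∀ m ≥ N, ∀ n ≥ N,
    (μ {ω | ε ≤ nrm (x m - x n) ω}).toReal < ε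

/-- The `RN` module `S` is complete: every Cauchy sequence converges in the
`(ε,λ)`-topology. -/
def IsCompleteRN [IsFiniteMeasure μ] (nrm : S → Ω →ₘ[μ] ℝ) : Prop :=
  ∀ x : ℕ → S, IsCauchyRN nrm x → ∃ y, Tendsto x atTop (@nhds S (elTop nrm) y)

end Top

section RNModule

variable (K : Type*) [RCLike K] {S : Type*} [AddCommGroup S] [Module (Ω →ₘ[μ] K) S]

/-- `(S, nrm)` is a random normed module (`RN` module) over `K` with base `(Ω,𝓕,P)`. -/
structure IsRNNorm (nrm : S → Ω →ₘ[μ] ℝ) : Prop where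
  nonneg : ∀ x, 0 ≤ nrm x
  smul_eq : ∀ (ξ : Ω →ₘ[μ] K) (x : S), nrm (ξ • x) = l0abs ξ * nrm x
  add_le : ∀ x y, nrm (x + y) ≤ nrm x + nrm y
  definite : ∀ x, nrm x = 0 → x = 0

section Semigroup
variable [IsFiniteMeasure μ]

/-- A family `{T t : t ≥ 0}` of continuous module homomorphisms (equivalently, of a.s. bounded
module homomorphisms) forming a `C₀`-semigroup on the `RN` module `S`. -/
structure IsC0Semigroup (nrm : S → Ω →ₘ[μ] ℝ) (T : ℝ → S →ₗ[Ω →ₘ[μ] K] S) : Prop where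
  bounded : ∀ t, 0 ≤ t → ∃ ξ : Ω →ₘ[μ] ℝ, 0 ≤ ξ ∧ ∀ x, nrm (T t x) ≤ ξ * nrm x
  id_eq : T 0 = LinearMap.id
  comp_eq : ∀ s t, 0 ≤ s → 0 ≤ t → T (s + t) = (T s).comp (T t)
  strong_cont : ∀ x : S, Tendsto (fun t => T t x) (nhdsWithin 0 (Ioi 0)) (@nhds S (elTop nrm) x)

/-- The `C₀`-semigroup `T` is a.s. bounded: `⋁_{t ∈ [0,L]} ‖T(t)‖ ∈ L⁰₊` for some `L > 0`. -/
def IsASBounded (nrm : S → Ω →ₘ[μ] ℝ) (T : ℝ → S →ₗ[Ω →ₘ[μ] K] S) : Prop :=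
  ∃ L : ℝ, 0 < L ∧ ∃ ξ : Ω →ₘ[μ] ℝ, 0 ≤ ξ ∧ ∀ t ∈ Icc 0 L, ∀ x, nrm (T t x) ≤ ξ * nrm x

/-- `GenRel nrm T x y` says `x ∈ D(A)` and `y = A x`, where `(A, D(A))` is the infinitesimal
generator of the semigroup `T`: `y = lim_{t ↓ 0} (T(t)x - x)/t` in the `(ε,λ)`-topology. -/
def GenRel (nrm : S → Ω →ₘ[μ] ℝ) (T : ℝ → S →ₗ[Ω →ₘ[μ] K] S) (x y : S) : Prop :=
  Tendsto (fun t : ℝ => rconst K μ t⁻¹ • (T t x - x)) (nhdsWithin 0 (Ioi 0))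
    (@nhds S (elTop nrm) y)

end Semigroup

/-- `R` is the resolvent `R(ξ,A) = (ξI - A)⁻¹ ∈ B(S)` of the module homomorphism
`A : D(A) → S`, i.e. `ξ ∈ ρ(A)`. -/
structure IsResolvent (nrm : S → Ω →ₘ[μ] ℝ) (p : Submodule (Ω →ₘ[μ] K) S)
    (A : p →ₗ[Ω →ₘ[μ] K] S) (ξ : Ω →ₘ[μ] K) (R : S →ₗ[Ω →ₘ[μ] K] S) : Prop where
  mem : ∀ x : S, R x ∈ p
  right_inv : ∀ x : S, ξ • R x - A ⟨R x, mem x⟩ = x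
  left_inv : ∀ y : p, R (ξ • (y : S) - A y) = (y : S)
  bounded : ∃ c : Ω →ₘ[μ] ℝ, 0 ≤ c ∧ ∀ x, nrm (R x) ≤ c * nrm x

end RNModule

end RNTheory

open RNTheory

namespace RNProofAux

open MeasureTheory Filter Set RNTheory

set_option linter.unusedSectionVars false

variable {Ω : Type*} [MeasurableSpace Ω] {μ : Measure Ω} [IsProbabilityMeasure μ]

/-- The tail probability `P(ε ≤ f)`. -/
def Qm (μ : Measure Ω) (f : Ω → ℝ) (ε : ℝ) : ℝ := (μ {ω | ε ≤ f ω}).toReal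

lemma Qm_nonneg (f : Ω → ℝ) (ε : ℝ) : 0 ≤ Qm μ f ε := ENNReal.toReal_nonneg

lemma Qm_congr {f g : Ω → ℝ} (hfg : f =ᵐ[μ] g) (ε : ℝ) : Qm μ f ε = Qm μ g ε := by
  unfold Qm
  congr 1
  apply measure_congr
  rw [Filter.eventuallyEq_set]
  filter_upwards [hfg] with ω hω
  simp [hω]

lemma Qm_le₃ (f g₁ g₂ g₃ : Ω → ℝ) {ε δ₁ δ₂ δ₃ : ℝ}
    (hae : ∀ᵐ ω ∂μ, ε ≤ f ω → δ₁ ≤ g₁ ω ∨ δ₂ ≤ g₂ ω ∨ δ₃ ≤ g₃ ω) :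
    Qm μ f ε ≤ Qm μ g₁ δ₁ + Qm μ g₂ δ₂ + Qm μ g₃ δ₃ := by
  have h1 : μ {ω | ε ≤ f ω} ≤
      μ ({ω | δ₁ ≤ g₁ ω} ∪ ({ω | δ₂ ≤ g₂ ω} ∪ {ω | δ₃ ≤ g₃ ω})) := by
    apply measure_mono_ae
    filter_upwards [hae] with ω hω h
    rcases hω h with h' | h' | h'
    · exact Or.inl h'
    · exact Or.inr (Or.inl h')
    · exact Or.inr (Or.inr h')
  have h2 : μ ({ω | δ₁ ≤ g₁ ω} ∪ ({ω | δ₂ ≤ g₂ ω} ∪ {ω | δ₃ ≤ g₃ ω})) ≤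
      μ {ω | δ₁ ≤ g₁ ω} + (μ {ω | δ₂ ≤ g₂ ω} + μ {ω | δ₃ ≤ g₃ ω}) :=
    (measure_union_le _ _).trans (by gcongr; exact measure_union_le _ _)
  have h3 := (h1.trans h2)
  have hne : ∀ s : Set Ω, μ s ≠ ⊤ := fun s => measure_ne_top μ s
  have h4 : (μ {ω | ε ≤ f ω}).toReal ≤
      (μ {ω | δ₁ ≤ g₁ ω} + (μ {ω | δ₂ ≤ g₂ ω} + μ {ω | δ₃ ≤ g₃ ω})).toReal :=
    ENNReal.toReal_mono (by simp [ENNReal.add_ne_top, hne]) h3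
  rw [ENNReal.toReal_add (hne _) (by simp [ENNReal.add_ne_top, hne]),
    ENNReal.toReal_add (hne _) (hne _)] at h4
  unfold Qm
  linarith

lemma Qm_le₂ (f g₁ g₂ : Ω → ℝ) {ε δ₁ δ₂ : ℝ}
    (hae : ∀ᵐ ω ∂μ, ε ≤ f ω → δ₁ ≤ g₁ ω ∨ δ₂ ≤ g₂ ω) :
    Qm μ f ε ≤ Qm μ g₁ δ₁ + Qm μ g₂ δ₂ := by
  have h := Qm_le₃ (μ := μ) f g₁ g₂ (fun _ => (0 : ℝ)) (δ₁ := δ₁) (δ₂ := δ₂) (δ₃ := 1)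
    (hae.mono fun ω h hh => (h hh).imp id Or.inl)
  have h0 : Qm μ (fun _ => (0 : ℝ)) 1 = 0 := by
    unfold Qm
    have : {ω : Ω | (1 : ℝ) ≤ 0} = ∅ := by
      ext ω; simp
    rw [this]
    simp
  rw [h0] at h
  linarith

lemma Qm_zero_fun {ε : ℝ} (hε : 0 < ε) : Qm μ (fun _ => (0 : ℝ)) ε = 0 := by
  unfold Qm
  have : {ω : Ω | ε ≤ 0} = ∅ := by ext ω; simp [not_le.2 hε]
  rw [this]; simp

lemma exists_truncation {f : Ω → ℝ} (hf : Measurable f) {δ : ℝ} (hδ : 0 < δ) :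
    ∃ M : ℝ, 0 < M ∧ Qm μ f M < δ := by
  set s : ℕ → Set Ω := fun k => {ω | (k : ℝ) ≤ f ω} with hs
  have hmeas : ∀ k, NullMeasurableSet (s k) μ :=
    fun k => (hf measurableSet_Ici).nullMeasurableSet
  have hanti : Antitone s := by
    intro k m hkm ω hω
    have hω' : (m : ℝ) ≤ f ω := hω
    have hkm' : (k : ℝ) ≤ m := by exact_mod_cast hkm
    show (k : ℝ) ≤ f ω
    linarith
  have hempty : (⋂ k, s k) = ∅ := by
    ext ω
    simp only [mem_iInter, mem_empty_iff_false, iff_false, not_forall]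
    obtain ⟨n, hn⟩ := exists_nat_gt (f ω)
    exact ⟨n, by simpa [s] using not_le.2 hn⟩
  have htend : Tendsto (fun k => μ (s k)) atTop (nhds 0) := by
    have := tendsto_measure_iInter_atTop (μ := μ) hmeas hanti ⟨0, measure_ne_top μ _⟩
    rwa [hempty, measure_empty] at this
  have htend' : Tendsto (fun k => (μ (s k)).toReal) atTop (nhds 0) := by
    have := (ENNReal.tendsto_toReal (by simp)).comp htend
    exact this
  obtain ⟨k, hk1, hk2⟩ := ((htend'.eventually_lt_const hδ).and (eventually_ge_atTop 1)).exists
  refine ⟨(k : ℝ), by exact_mod_cast hk2, ?_⟩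
  exact hk1

lemma exists_lower {f : Ω → ℝ} (hf : Measurable f) {ε lam : ℝ} (hε : 0 < ε)
    (hlt : Qm μ f ε < lam) : ∃ δ : ℝ, 0 < δ ∧ δ < ε ∧ Qm μ f (ε - δ) < lam := by
  set s : ℕ → Set Ω := fun k => {ω | ε - 1 / (k + 1 : ℝ) ≤ f ω} with hs
  have hmeas : ∀ k, NullMeasurableSet (s k) μ :=
    fun k => (hf measurableSet_Ici).nullMeasurableSet
  have hanti : Antitone s := by
    intro k m hkm ω hω
    have h1 : (1 : ℝ) / (m + 1) ≤ 1 / (k + 1) := by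
      apply one_div_le_one_div_of_le (by positivity)
      have : (k : ℝ) ≤ m := by exact_mod_cast hkm
      linarith
    have hω' : ε - 1 / (m + 1 : ℝ) ≤ f ω := hω
    show ε - 1 / (k + 1 : ℝ) ≤ f ω
    linarith
  have hinter : (⋂ k, s k) = {ω | ε ≤ f ω} := by
    ext ω
    simp only [hs, mem_iInter, mem_setOf_eq]
    constructor
    · intro hall
      by_contra hcon
      push_neg at hcon
      obtain ⟨n, hn⟩ := exists_nat_one_div_lt (sub_pos.2 hcon)
      have := hall n
      linarith
    · intro hle k
      have hpos : (0 : ℝ) < 1 / (k + 1) := by positivity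
      linarith
  have htend : Tendsto (fun k => (μ (s k)).toReal) atTop (nhds (Qm μ f ε)) := by
    have h0 := tendsto_measure_iInter_atTop (μ := μ) hmeas hanti ⟨0, measure_ne_top μ _⟩
    rw [hinter] at h0
    have := (ENNReal.tendsto_toReal (measure_ne_top μ _)).comp h0
    exact this
  obtain ⟨k₀, hk₀⟩ := exists_nat_one_div_lt hε
  obtain ⟨k, hk1, hk2⟩ := ((htend.eventually_lt_const hlt).and (eventually_ge_atTop k₀)).exists
  refine ⟨1 / (k + 1 : ℝ), by positivity, ?_, ?_⟩
  · have h1 : (1 : ℝ) / (k + 1) ≤ 1 / (k₀ + 1) := by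
      apply one_div_le_one_div_of_le (by positivity)
      have : (k₀ : ℝ) ≤ k := by exact_mod_cast hk2
      linarith
    linarith
  · exact hk1

section RN

variable {K : Type*} [RCLike K] {S : Type*} [AddCommGroup S] [Module (Ω →ₘ[μ] K) S]
variable {nrm : S → Ω →ₘ[μ] ℝ}

lemma ae_nonneg (h : IsRNNorm K nrm) (v : S) : ∀ᵐ ω ∂μ, 0 ≤ nrm v ω := by
  filter_upwards [AEEqFun.coeFn_le.2 (h.nonneg v), AEEqFun.coeFn_zero (β := ℝ) (μ := μ)]
    with ω h1 h2
  rw [h2] at h1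
  simpa using h1

lemma ae_tri (h : IsRNNorm K nrm) (u v : S) :
    ∀ᵐ ω ∂μ, nrm (u + v) ω ≤ nrm u ω + nrm v ω := by
  filter_upwards [AEEqFun.coeFn_le.2 (h.add_le u v), AEEqFun.coeFn_add (nrm u) (nrm v)]
    with ω h1 h2
  rw [h2] at h1
  simpa using h1

lemma ae_smul (h : IsRNNorm K nrm) (t : ℝ) (v : S) :
    ∀ᵐ ω ∂μ, nrm (rconst K μ t • v) ω = |t| * nrm v ω := by
  rw [h.smul_eq]
  unfold l0abs rconst
  filter_upwards [AEEqFun.coeFn_mul ((AEEqFun.const Ω ((RCLike.ofReal t : K))).comp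
      (fun a : K => ‖a‖) continuous_norm) (nrm v),
    AEEqFun.coeFn_comp (fun a : K => ‖a‖) continuous_norm
      (AEEqFun.const Ω ((RCLike.ofReal t : K))),
    AEEqFun.coeFn_const (μ := μ) Ω ((RCLike.ofReal t : K))] with ω h1 h2 h3
  rw [h1, Pi.mul_apply, h2, Function.comp_apply, h3]
  simp [RCLike.norm_ofReal]

lemma ae_neg (h : IsRNNorm K nrm) (v : S) : ∀ᵐ ω ∂μ, nrm (-v) ω = nrm v ω := by
  have e : (-v : S) = ((-1 : Ω →ₘ[μ] K)) • v := (neg_one_smul _ v).symm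
  rw [e, h.smul_eq]
  unfold l0abs
  filter_upwards [AEEqFun.coeFn_mul ((-1 : Ω →ₘ[μ] K).comp
      (fun a : K => ‖a‖) continuous_norm) (nrm v),
    AEEqFun.coeFn_comp (fun a : K => ‖a‖) continuous_norm (-1 : Ω →ₘ[μ] K),
    AEEqFun.coeFn_neg (1 : Ω →ₘ[μ] K), AEEqFun.coeFn_one (β := K) (μ := μ)]
    with ω h1 h2 h3 h4
  rw [h1, Pi.mul_apply, h2, Function.comp_apply, h3, Pi.neg_apply, h4]
  simp

lemma ae_zero (h : IsRNNorm K nrm) : ∀ᵐ ω ∂μ, nrm (0 : S) ω = 0 := by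
  have e : (0 : S) = ((0 : Ω →ₘ[μ] K)) • (0 : S) := (smul_zero (0 : Ω →ₘ[μ] K)).symm
  rw [e, h.smul_eq]
  unfold l0abs
  filter_upwards [AEEqFun.coeFn_mul ((0 : Ω →ₘ[μ] K).comp
      (fun a : K => ‖a‖) continuous_norm) (nrm (0 : S)),
    AEEqFun.coeFn_comp (fun a : K => ‖a‖) continuous_norm (0 : Ω →ₘ[μ] K),
    AEEqFun.coeFn_zero (β := K) (μ := μ)] with ω h1 h2 h3
  rw [h1, Pi.mul_apply, h2, Function.comp_apply, h3]
  simp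

lemma mem_Nset_iff (nrm : S → Ω →ₘ[μ] ℝ) (x₀ y : S) {ε lam : ℝ} :
    y ∈ Nset nrm x₀ ε lam ↔ Qm μ (⇑(nrm (y - x₀))) ε < lam := by
  have hA : MeasurableSet {ω | (nrm (y - x₀)) ω < ε} :=
    (nrm (y - x₀)).stronglyMeasurable.measurable measurableSet_Iio
  have hcompl : {ω | (nrm (y - x₀)) ω < ε}ᶜ = {ω | ε ≤ (nrm (y - x₀)) ω} := by
    ext ω; simp [not_lt]
  have hsum : (μ {ω | (nrm (y - x₀)) ω < ε}).toReal + Qm μ (⇑(nrm (y - x₀))) ε = 1 := by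
    unfold Qm
    rw [← hcompl, ← ENNReal.toReal_add (measure_ne_top μ _) (measure_ne_top μ _),
      measure_add_measure_compl hA, measure_univ, ENNReal.toReal_one]
  constructor
  · intro hy
    have h1 : 1 - lam < (μ {ω | (nrm (y - x₀)) ω < ε}).toReal := hy
    linarith
  · intro hq
    show 1 - lam < (μ {ω | (nrm (y - x₀)) ω < ε}).toReal
    linarith

lemma isOpen_Nset (h : IsRNNorm K nrm) (x₀ : S) {ε lam : ℝ} (hε : 0 < ε) :
    @IsOpen S (elTop nrm) (Nset nrm x₀ ε lam) := by
  show ∀ y ∈ Nset nrm x₀ ε lam, ∃ ε' > (0:ℝ), ∃ lam' : ℝ, 0 < lam' ∧ lam' < 1 ∧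
    Nset nrm y ε' lam' ⊆ Nset nrm x₀ ε lam
  intro y hy
  rw [mem_Nset_iff] at hy
  obtain ⟨δ, hδ0, hδε, hδ⟩ :=
    exists_lower ((nrm (y - x₀)).stronglyMeasurable.measurable) hε hy
  set c : ℝ := lam - Qm μ (⇑(nrm (y - x₀))) (ε - δ) with hc
  have hc0 : 0 < c := by simp only [hc]; linarith
  refine ⟨δ, hδ0, min (c/2) (1/2), lt_min (by linarith) (by norm_num),
    lt_of_le_of_lt (min_le_right _ _) (by norm_num), ?_⟩
  intro z hz
  rw [mem_Nset_iff] at hz ⊢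
  have key : Qm μ (⇑(nrm (z - x₀))) ε ≤
      Qm μ (⇑(nrm (z - y))) δ + Qm μ (⇑(nrm (y - x₀))) (ε - δ) := by
    have e : z - x₀ = (z - y) + (y - x₀) := (sub_add_sub_cancel z y x₀).symm
    apply Qm_le₂
    have tri := ae_tri h (z - y) (y - x₀)
    rw [← e] at tri
    filter_upwards [tri] with ω h1 h2
    by_contra hcon
    push_neg at hcon
    obtain ⟨hc1, hc2⟩ := hcon
    linarith
  have hz' : Qm μ (⇑(nrm (z - y))) δ < c/2 := lt_of_lt_of_le hz (min_le_left _ _)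
  calc Qm μ (⇑(nrm (z - x₀))) ε ≤ _ := key
    _ < lam := by simp only [hc] at hz' ⊢; linarith

lemma tendsto_elTop_iff (h : IsRNNorm K nrm) {ι : Type*} {l : Filter ι} {f : ι → S} {a : S} :
    Tendsto f l (@nhds S (elTop nrm) a) ↔
      ∀ ε > (0:ℝ), ∀ δ > (0:ℝ), ∀ᶠ i in l, Qm μ (⇑(nrm (f i - a))) ε < δ := by
  letI : TopologicalSpace S := elTop nrm
  constructor
  · intro H ε hε δ hδ
    set lam := min δ (1/2) with hlam
    have hlam0 : 0 < lam := lt_min hδ (by norm_num)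
    have hmem : Nset nrm a ε lam ∈ @nhds S (elTop nrm) a := by
      apply IsOpen.mem_nhds (isOpen_Nset h a hε)
      rw [mem_Nset_iff]
      have hq : Qm μ (⇑(nrm (a - a))) ε = 0 := by
        rw [Qm_congr (g := fun _ => (0:ℝ)) ?_ ε, Qm_zero_fun hε]
        have e : a - a = (0 : S) := sub_self a
        rw [e]
        exact ae_zero h
      rw [hq]; exact hlam0
    have hev : ∀ᶠ i in l, f i ∈ Nset nrm a ε lam := H hmem
    exact hev.mono fun i hi =>
      lt_of_lt_of_le ((mem_Nset_iff nrm a (f i)).1 hi) (min_le_left _ _)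
  · intro H U hU
    rw [@mem_nhds_iff S (elTop nrm) a U] at hU
    obtain ⟨V, hVU, hVopen, haV⟩ := hU
    obtain ⟨ε, hε, lam, hlam0, hlam1, hsub⟩ := hVopen a haV
    rw [Filter.mem_map]
    filter_upwards [H ε hε lam hlam0] with i hi
    exact hVU (hsub ((mem_Nset_iff nrm a (f i)).2 hi))

lemma tendsto_of_bound₂ (h : IsRNNorm K nrm) {ι : Type*} {l : Filter ι}
    {f g k : ι → S} {a b c : S} {ξ : Ω → ℝ} (hξm : Measurable ξ)
    (hξ0 : ∀ᵐ ω ∂μ, 0 ≤ ξ ω)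
    (hbd : ∀ᶠ i in l, ∀ᵐ ω ∂μ,
      nrm (f i - a) ω ≤ ξ ω * nrm (g i - b) ω + ξ ω * nrm (k i - c) ω)
    (hg : Tendsto g l (@nhds S (elTop nrm) b))
    (hk : Tendsto k l (@nhds S (elTop nrm) c)) :
    Tendsto f l (@nhds S (elTop nrm) a) := by
  rw [tendsto_elTop_iff h] at hg hk ⊢
  intro ε hε δ hδ
  obtain ⟨M, hM0, hMδ⟩ := exists_truncation (μ := μ) hξm (show (0:ℝ) < δ/3 by linarith)
  have hε' : (0:ℝ) < ε / (2*M) := by positivity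
  filter_upwards [hbd, hg (ε/(2*M)) hε' (δ/3) (by linarith),
    hk (ε/(2*M)) hε' (δ/3) (by linarith)] with i hi hgi hki
  have hle : Qm μ (⇑(nrm (f i - a))) ε ≤
      Qm μ ξ M + Qm μ (⇑(nrm (g i - b))) (ε/(2*M)) + Qm μ (⇑(nrm (k i - c))) (ε/(2*M)) := by
    apply Qm_le₃
    filter_upwards [hi, hξ0, ae_nonneg h (g i - b), ae_nonneg h (k i - c)]
      with ω e1 e2 e3 e4 e5
    by_contra hcon
    push_neg at hcon
    obtain ⟨hc1, hc2, hc3⟩ := hcon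
    have q1 : ξ ω * nrm (g i - b) ω ≤ M * nrm (g i - b) ω :=
      mul_le_mul_of_nonneg_right hc1.le e3
    have q2 : M * nrm (g i - b) ω < M * (ε/(2*M)) := by
      exact mul_lt_mul_of_pos_left hc2 hM0
    have q3 : ξ ω * nrm (k i - c) ω ≤ M * nrm (k i - c) ω :=
      mul_le_mul_of_nonneg_right hc1.le e4
    have q4 : M * nrm (k i - c) ω < M * (ε/(2*M)) := by
      exact mul_lt_mul_of_pos_left hc3 hM0
    have q5 : M * (ε/(2*M)) = ε/2 := by
      field_simp
    rw [q5] at q2 q4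
    linarith
  linarith

lemma tendsto_of_bound (h : IsRNNorm K nrm) {ι : Type*} {l : Filter ι}
    {f g : ι → S} {a b : S} {ξ : Ω → ℝ} (hξm : Measurable ξ)
    (hξ0 : ∀ᵐ ω ∂μ, 0 ≤ ξ ω)
    (hbd : ∀ᶠ i in l, ∀ᵐ ω ∂μ, nrm (f i - a) ω ≤ ξ ω * nrm (g i - b) ω)
    (hg : Tendsto g l (@nhds S (elTop nrm) b)) :
    Tendsto f l (@nhds S (elTop nrm) a) := by
  letI : TopologicalSpace S := elTop nrm
  apply tendsto_of_bound₂ h hξm hξ0 ?_ hg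
    (tendsto_const_nhds : Tendsto (fun _ : ι => b) l (@nhds S (elTop nrm) b))
  filter_upwards [hbd] with i hi
  filter_upwards [hi, ae_zero h] with ω e1 e2
  simp only [sub_self]
  rw [e2, mul_zero]
  linarith

lemma nrm_sum_le (h : IsRNNorm K nrm) (w : ℕ → S) (c : Ω → ℝ) :
    ∀ n : ℕ, (∀ i < n, ∀ᵐ ω ∂μ, nrm (w i) ω ≤ c ω) →
    ∀ᵐ ω ∂μ, nrm (∑ i ∈ Finset.range n, w i) ω ≤ n * c ω := by
  intro n
  induction n with
  | zero =>
    intro _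
    filter_upwards [ae_zero h] with ω hω
    simp [Finset.sum_range_zero, hω]
  | succ m ih =>
    intro hw
    have ihm := ih (fun i hi => hw i (hi.trans (Nat.lt_succ_self m)))
    filter_upwards [ihm, hw m (Nat.lt_succ_self m),
      ae_tri h (∑ i ∈ Finset.range m, w i) (w m)] with ω h1 h2 h3
    rw [Finset.sum_range_succ]
    push_cast
    calc nrm (∑ i ∈ Finset.range m, w i + w m) ω ≤
        nrm (∑ i ∈ Finset.range m, w i) ω + nrm (w m) ω := h3
      _ ≤ (m : ℝ) * c ω + c ω := by linarith
      _ = ((m : ℝ) + 1) * c ω := by ring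

lemma ubound [IsFiniteMeasure μ] (h : IsRNNorm K nrm) {T : ℝ → S →ₗ[Ω →ₘ[μ] K] S}
    (hT : IsC0Semigroup K nrm T) (hb : IsASBounded K nrm T) (r : ℝ) :
    ∃ ξ : Ω → ℝ, Measurable ξ ∧ (∀ᵐ ω ∂μ, 0 ≤ ξ ω) ∧
      ∀ t ∈ Icc (0:ℝ) r, ∀ v : S, ∀ᵐ ω ∂μ, nrm (T t v) ω ≤ ξ ω * nrm v ω := by
  obtain ⟨L, hL, ξ₀, hξ₀0, hξ₀⟩ := hb
  have hξ0ae : ∀ᵐ ω ∂μ, 0 ≤ ξ₀ ω := by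
    filter_upwards [AEEqFun.coeFn_le.2 hξ₀0, AEEqFun.coeFn_zero (β := ℝ) (μ := μ)]
      with ω h1 h2
    rw [h2] at h1
    simpa using h1
  have hstep : ∀ t ∈ Icc (0:ℝ) L, ∀ v : S, ∀ᵐ ω ∂μ, nrm (T t v) ω ≤ ξ₀ ω * nrm v ω := by
    intro t ht v
    filter_upwards [AEEqFun.coeFn_le.2 (hξ₀ t ht v), AEEqFun.coeFn_mul ξ₀ (nrm v)]
      with ω h1 h2
    rw [h2] at h1
    simpa using h1
  have main : ∀ n : ℕ, ∀ t ∈ Icc (0:ℝ) (n * L), ∀ v : S,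
      ∀ᵐ ω ∂μ, nrm (T t v) ω ≤ (ξ₀ ω + 1) ^ n * nrm v ω := by
    intro n
    induction n with
    | zero =>
      intro t ht v
      have ht0 : t = 0 := le_antisymm (by simpa using ht.2) ht.1
      subst ht0
      rw [hT.id_eq]
      filter_upwards [] with ω
      simp
    | succ m ih =>
      intro t ht v
      have htcast : t ≤ ((m : ℝ) + 1) * L := by
        have := ht.2
        push_cast at this
        linarith
      by_cases hcs : t ≤ m * L
      · have hthis := ih t ⟨ht.1, hcs⟩ v
        filter_upwards [hthis, hξ0ae, ae_nonneg h v] with ω h1 h2 h3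
        have hbase : (0:ℝ) ≤ ξ₀ ω + 1 := by linarith
        have hpow : (ξ₀ ω + 1) ^ m ≤ (ξ₀ ω + 1) ^ (m+1) := by
          rw [pow_succ]
          nlinarith [pow_nonneg hbase m]
        nlinarith [pow_nonneg hbase m, mul_nonneg (pow_nonneg hbase m) h3]
      · push_neg at hcs
        have hmL : (0:ℝ) ≤ (m : ℝ) * L := by positivity
        have e1 : T t v = T (t - m*L) (T (m*L) v) := by
          have hco := hT.comp_eq (t - m*L) (m*L) (by linarith) hmL
          rw [sub_add_cancel] at hco
          rw [hco]
          rfl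
        rw [e1]
        have hb1 := hstep (t - m*L) ⟨by linarith, by linarith⟩ (T (m*L) v)
        have hb2 := ih (m*L) ⟨hmL, le_refl _⟩ v
        filter_upwards [hb1, hb2, hξ0ae, ae_nonneg h v, ae_nonneg h (T (m*L) v)]
          with ω e2 e3 e4 e5 e6
        have hbase : (0:ℝ) ≤ ξ₀ ω + 1 := by linarith
        calc nrm (T (t - m*L) (T (m*L) v)) ω ≤ ξ₀ ω * nrm (T (m*L) v) ω := e2
          _ ≤ ξ₀ ω * ((ξ₀ ω + 1)^m * nrm v ω) := mul_le_mul_of_nonneg_left e3 e4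
          _ ≤ (ξ₀ ω + 1)^(m+1) * nrm v ω := by
              rw [pow_succ]
              nlinarith [pow_nonneg hbase m, mul_nonneg (pow_nonneg hbase m) e5]
  obtain ⟨n, hn⟩ := exists_nat_ge (r / L)
  have hrn : r ≤ n * L := by
    rw [div_le_iff₀ hL] at hn
    linarith
  refine ⟨fun ω => (ξ₀ ω + 1) ^ n, ?_, ?_, ?_⟩
  · exact ((ξ₀.stronglyMeasurable.measurable).add measurable_const).pow_const n
  · filter_upwards [hξ0ae] with ω h1
    positivity
  · intro t ht v
    exact main n t ⟨ht.1, ht.2.trans hrn⟩ v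

lemma rconst_mul (a b : ℝ) :
    rconst K μ a * rconst K μ b = rconst K μ (a * b) := by
  apply AEEqFun.ext
  filter_upwards [AEEqFun.coeFn_mul (rconst K μ a) (rconst K μ b),
    AEEqFun.coeFn_const (μ := μ) Ω ((RCLike.ofReal a : K)),
    AEEqFun.coeFn_const (μ := μ) Ω ((RCLike.ofReal b : K)),
    AEEqFun.coeFn_const (μ := μ) Ω ((RCLike.ofReal (a*b) : K))] with ω h1 h2 h3 h4
  show (rconst K μ a * rconst K μ b) ω = (rconst K μ (a*b)) ω
  unfold rconst at *
  rw [h1, Pi.mul_apply, h2, h3, h4]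
  simp [Function.const, RCLike.ofReal_mul]

lemma rconst_one : rconst K μ (1:ℝ) = (1 : Ω →ₘ[μ] K) := by
  apply AEEqFun.ext
  filter_upwards [AEEqFun.coeFn_const (μ := μ) Ω ((RCLike.ofReal (1:ℝ) : K)),
    AEEqFun.coeFn_one (β := K) (μ := μ)] with ω h1 h2
  show (rconst K μ 1) ω = (1 : Ω →ₘ[μ] K) ω
  unfold rconst
  rw [h1, h2]
  simp [Function.const]

lemma rconst_neg (a : ℝ) :
    rconst K μ (-a) = - rconst K μ a := by
  apply AEEqFun.ext
  filter_upwards [AEEqFun.coeFn_const (μ := μ) Ω ((RCLike.ofReal (-a) : K)),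
    AEEqFun.coeFn_neg (rconst K μ a),
    AEEqFun.coeFn_const (μ := μ) Ω ((RCLike.ofReal a : K))] with ω h1 h2 h3
  show (rconst K μ (-a)) ω = (- rconst K μ a) ω
  unfold rconst at *
  rw [h1, h2, Pi.neg_apply, h3]
  simp [Function.const]

lemma rconst_smul_inv {t : ℝ} (ht : t ≠ 0) (v : S) :
    rconst K μ t • rconst K μ t⁻¹ • v = v := by
  rw [smul_smul, rconst_mul, mul_inv_cancel₀ ht, rconst_one, one_smul]

end RN

end RNProofAux

/-- Let `{T(t) : t ≥ 0}` be an a.s. bounded `C₀`-semigroup on a complete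
`RN` module `S` with generator `(A, D(A))`. For every `x ∈ D(A)` (with `y = Ax`):
`T(t)x ∈ D(A)` with `A T(t)x = T(t)Ax`, the orbit map is differentiable with
`(d/dt) T(t)x = T(t)Ax`, and for every `r > 0` the Riemann integral
`∫₀ʳ T(s)Ax ds = ∫₀ʳ A T(s)x ds` (the limit of the Riemann sums of `s ↦ T(s)Ax`) equals
`T(r)x - x`. -/
theorem generator_calculus_for_as_bounded_semigroup
    {Ω : Type*} [MeasurableSpace Ω] (μ : Measure Ω) [IsProbabilityMeasure μ]
    (K : Type*) [RCLike K] {S : Type*} [AddCommGroup S] [Module (Ω →ₘ[μ] K) S]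
    (nrm : S → Ω →ₘ[μ] ℝ) (h : IsRNNorm K nrm) (hcomplete : IsCompleteRN nrm)
    (T : ℝ → S →ₗ[Ω →ₘ[μ] K] S) (hT : IsC0Semigroup K nrm T)
    (hb : IsASBounded K nrm T) :
    ∀ x y, GenRel K nrm T x y →
      (∀ t : ℝ, 0 ≤ t →
        GenRel K nrm T (T t x) (T t y) ∧
        Tendsto (fun dt : ℝ => rconst K μ dt⁻¹ • (T (t + dt) x - T t x))
          (nhdsWithin 0 {dt : ℝ | dt ≠ 0 ∧ 0 ≤ t + dt})
          (@nhds S (elTop nrm) (T t y))) ∧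
      (∀ r : ℝ, 0 < r →
        Tendsto (fun n : ℕ =>
            rconst K μ (r / n) • (Finset.range n).sum (fun i => T (i * r / n) y))
          atTop (@nhds S (elTop nrm) (T r x - x))) := by
  intro x y hxy
  have hxy' : Tendsto (fun s : ℝ => rconst K μ s⁻¹ • (T s x - x)) (nhdsWithin 0 (Ioi 0))
      (@nhds S (elTop nrm) y) := hxy
  set D : ℝ → S := fun s => rconst K μ s⁻¹ • (T s x - x) with hD
  refine ⟨fun t ht => ?_, fun r hr => ?_⟩
  · obtain ⟨ξ, hξm, hξ0, hξ⟩ := RNProofAux.ubound h hT hb t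
    have genTt : Tendsto (fun s : ℝ => rconst K μ s⁻¹ • (T s (T t x) - T t x))
        (nhdsWithin 0 (Ioi 0)) (@nhds S (elTop nrm) (T t y)) := by
      apply RNProofAux.tendsto_of_bound (g := D) (b := y) h hξm hξ0 ?_ hxy'
      filter_upwards [self_mem_nhdsWithin] with s hs
      have hs0 : (0:ℝ) < s := hs
      have e1 : T s (T t x) = T t (T s x) := by
        have c1 := hT.comp_eq s t hs0.le ht
        have c2 := hT.comp_eq t s ht hs0.le
        calc T s (T t x) = T (s + t) x := by rw [c1]; rfl
          _ = T (t + s) x := by rw [add_comm]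
          _ = T t (T s x) := by rw [c2]; rfl
      have e2 : rconst K μ s⁻¹ • (T s (T t x) - T t x) - T t y = T t (D s - y) := by
        rw [e1, ← map_sub, ← _root_.map_smul, ← map_sub]
      rw [e2]
      exact hξ t ⟨ht, le_refl t⟩ (D s - y)
    refine ⟨genTt, ?_⟩
    have hsplit : {dt : ℝ | dt ≠ 0 ∧ 0 ≤ t + dt} =
        ({dt : ℝ | dt ≠ 0 ∧ 0 ≤ t + dt} ∩ Iio 0) ∪
        ({dt : ℝ | dt ≠ 0 ∧ 0 ≤ t + dt} ∩ Ioi 0) := by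
      ext dt
      simp only [mem_union, mem_inter_iff, mem_setOf_eq, mem_Iio, mem_Ioi]
      constructor
      · intro hdt
        rcases lt_trichotomy dt 0 with hc | hc | hc
        · exact Or.inl ⟨hdt, hc⟩
        · exact absurd hc hdt.1
        · exact Or.inr ⟨hdt, hc⟩
      · rintro (⟨h1, _⟩ | ⟨h1, _⟩) <;> exact h1
    rw [show nhdsWithin (0:ℝ) {dt : ℝ | dt ≠ 0 ∧ 0 ≤ t + dt} =
        nhdsWithin 0 ({dt : ℝ | dt ≠ 0 ∧ 0 ≤ t + dt} ∩ Iio 0) ⊔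
        nhdsWithin 0 ({dt : ℝ | dt ≠ 0 ∧ 0 ≤ t + dt} ∩ Ioi 0) by
      rw [← nhdsWithin_union, ← hsplit]]
    rw [Filter.tendsto_sup]
    constructor
    · -- left (negative) part
      have hneg : Tendsto (fun dt : ℝ => -dt)
          (nhdsWithin (0:ℝ) ({dt : ℝ | dt ≠ 0 ∧ 0 ≤ t + dt} ∩ Iio 0))
          (nhdsWithin 0 (Ioi 0)) := by
        rw [tendsto_nhdsWithin_iff]
        constructor
        · have hcont : Tendsto (fun dt : ℝ => -dt) (nhds 0) (nhds (-0 : ℝ)) :=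
            (continuous_neg).tendsto 0
          simpa using hcont.mono_left nhdsWithin_le_nhds
        · filter_upwards [self_mem_nhdsWithin] with dt hdt
          have hdt2 : dt < 0 := hdt.2
          exact neg_pos.2 hdt2
      have hg : Tendsto (fun dt : ℝ => D (-dt))
          (nhdsWithin (0:ℝ) ({dt : ℝ | dt ≠ 0 ∧ 0 ≤ t + dt} ∩ Iio 0))
          (@nhds S (elTop nrm) y) := hxy'.comp hneg
      have hk : Tendsto (fun dt : ℝ => T (-dt) y)
          (nhdsWithin (0:ℝ) ({dt : ℝ | dt ≠ 0 ∧ 0 ≤ t + dt} ∩ Iio 0))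
          (@nhds S (elTop nrm) y) := (hT.strong_cont y).comp hneg
      apply RNProofAux.tendsto_of_bound₂ (g := fun dt : ℝ => D (-dt)) (b := y)
        (k := fun dt : ℝ => T (-dt) y) (c := y) h hξm hξ0 ?_ hg hk
      filter_upwards [self_mem_nhdsWithin] with dt hdt
      have hdtneg : dt < 0 := hdt.2
      have htdt : 0 ≤ t + dt := hdt.1.2
      have hc2 : T t y = T (t+dt) (T (-dt) y) := by
        have c := hT.comp_eq (t+dt) (-dt) htdt (by linarith)
        have e : (t+dt) + -dt = t := by ring
        rw [e] at c
        rw [c]; rfl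
      have hc1 : T t x = T (t+dt) (T (-dt) x) := by
        have c := hT.comp_eq (t+dt) (-dt) htdt (by linarith)
        have e : (t+dt) + -dt = t := by ring
        rw [e] at c
        rw [c]; rfl
      have hphi : rconst K μ dt⁻¹ • (T (t+dt) x - T t x) = T (t+dt) (D (-dt)) := by
        rw [hc1, ← map_sub, ← _root_.map_smul]
        congr 1
        have e1 : dt⁻¹ = -((-dt)⁻¹) := by
          rw [inv_neg, neg_neg]
        rw [e1, RNProofAux.rconst_neg, neg_smul, ← smul_neg, neg_sub]
      have hdecomp : rconst K μ dt⁻¹ • (T (t + dt) x - T t x) - T t y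
          = T (t+dt) (D (-dt) - y) + T (t+dt) (-(T (-dt) y - y)) := by
        rw [hphi, hc2, ← map_add, ← map_sub]
        congr 1
        abel
      have b1 := hξ (t+dt) ⟨htdt, by linarith⟩ (D (-dt) - y)
      have b2 := hξ (t+dt) ⟨htdt, by linarith⟩ (-(T (-dt) y - y))
      filter_upwards [b1, b2,
        RNProofAux.ae_tri h (T (t+dt) (D (-dt) - y)) (T (t+dt) (-(T (-dt) y - y))),
        RNProofAux.ae_neg h (T (-dt) y - y)] with ω e1 e2 e3 e4
      show nrm (rconst K μ dt⁻¹ • (T (t + dt) x - T t x) - T t y) ω ≤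
        ξ ω * nrm (D (-dt) - y) ω + ξ ω * nrm (T (-dt) y - y) ω
      rw [hdecomp]
      calc nrm (T (t+dt) (D (-dt) - y) + T (t+dt) (-(T (-dt) y - y))) ω
          ≤ nrm (T (t+dt) (D (-dt) - y)) ω + nrm (T (t+dt) (-(T (-dt) y - y))) ω := e3
        _ ≤ ξ ω * nrm (D (-dt) - y) ω + ξ ω * nrm (-(T (-dt) y - y)) ω := add_le_add e1 e2
        _ = ξ ω * nrm (D (-dt) - y) ω + ξ ω * nrm (T (-dt) y - y) ω := by rw [e4]
    · -- right (positive) part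
      have hmono : nhdsWithin (0:ℝ) ({dt : ℝ | dt ≠ 0 ∧ 0 ≤ t + dt} ∩ Ioi 0) ≤
          nhdsWithin 0 (Ioi 0) := nhdsWithin_mono 0 inter_subset_right
      refine (genTt.mono_left hmono).congr' ?_
      filter_upwards [self_mem_nhdsWithin] with dt hdt
      have hdt0 : (0:ℝ) < dt := hdt.2
      have e1 : T dt (T t x) = T (t + dt) x := by
        have c := hT.comp_eq dt t hdt0.le ht
        rw [add_comm t dt, c]; rfl
      show rconst K μ dt⁻¹ • (T dt (T t x) - T t x) = rconst K μ dt⁻¹ • (T (t + dt) x - T t x)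
      rw [e1]
  · -- Riemann sums
    obtain ⟨ξ, hξm, hξ0, hξ⟩ := RNProofAux.ubound h hT hb r
    have hDlim : Tendsto (fun n : ℕ => D (r / n)) atTop (@nhds S (elTop nrm) y) := by
      apply hxy'.comp
      rw [tendsto_nhdsWithin_iff]
      constructor
      · exact tendsto_const_div_atTop_nhds_zero_nat r
      · filter_upwards [eventually_ge_atTop 1] with n hn
        have hn0 : (0:ℝ) < n := by exact_mod_cast hn
        exact div_pos hr hn0
    apply RNProofAux.tendsto_of_bound (g := fun n : ℕ => D (r / n)) (b := y)
      (ξ := fun ω => r * ξ ω) h (measurable_const.mul hξm) ?_ ?_ hDlim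
    · filter_upwards [hξ0] with ω e
      exact mul_nonneg hr.le e
    · filter_upwards [eventually_ge_atTop 1] with n hn
      have hn0 : (0:ℝ) < n := by exact_mod_cast hn
      have hτ0 : (0:ℝ) < r / n := div_pos hr hn0
      have hτne : (r / (n:ℝ)) ≠ 0 := ne_of_gt hτ0
      -- telescoping identity
      have hterm : ∀ i : ℕ, T (((i:ℝ)+1) * (r/n)) x - T ((i:ℝ)*(r/n)) x
          = T ((i:ℝ)*(r/n)) (rconst K μ (r/n) • D (r/n)) := by
        intro i
        have hiτ : (0:ℝ) ≤ (i:ℝ)*(r/n) := by positivity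
        have c := hT.comp_eq ((i:ℝ)*(r/n)) (r/n) hiτ hτ0.le
        have e : (i:ℝ)*(r/n) + (r/n) = ((i:ℝ)+1)*(r/n) := by ring
        rw [e] at c
        have hTτ : rconst K μ (r/n) • D (r/n) = T (r/n) x - x := by
          simp only [hD]
          exact RNProofAux.rconst_smul_inv hτne _
        rw [hTτ, map_sub, c]
        rfl
      have htel : T r x - x =
          ∑ i ∈ Finset.range n, T ((i:ℝ)*(r/n)) (rconst K μ (r/n) • D (r/n)) := by
        have hsub := Finset.sum_range_sub (fun i : ℕ => T ((i:ℝ)*(r/n)) x) n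
        have e1 : ((n:ℝ))*(r/n) = r := by field_simp
        calc T r x - x
            = ∑ i ∈ Finset.range n, (T ((↑(i+1):ℝ)*(r/n)) x - T ((i:ℝ)*(r/n)) x) := by
              rw [hsub]
              congr 1
              · rw [e1]
              · rw [show ((0:ℕ):ℝ) * (r/n) = 0 by push_cast; ring, hT.id_eq]
                rfl
          _ = ∑ i ∈ Finset.range n, T ((i:ℝ)*(r/n)) (rconst K μ (r/n) • D (r/n)) := by
              apply Finset.sum_congr rfl
              intro i _
              rw [show ((↑(i+1):ℝ)) = (i:ℝ)+1 by push_cast; ring]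
              exact hterm i
      have hsumeq : rconst K μ (r/(n:ℝ)) • (∑ i ∈ Finset.range n, T ((i:ℝ) * r / (n:ℝ)) y)
            - (T r x - x)
          = ∑ i ∈ Finset.range n, T ((i:ℝ)*(r/n)) (rconst K μ (r/n) • (y - D (r/n))) := by
        rw [htel]
        rw [Finset.smul_sum (r := rconst K μ (r/(n:ℝ))) (s := Finset.range n) (f := fun i : ℕ => T ((i:ℝ) * r / (n:ℝ)) y)]
        rw [← Finset.sum_sub_distrib]
        apply Finset.sum_congr rfl
        intro i _
        rw [show (i:ℝ) * r / (n:ℝ) = (i:ℝ)*(r/n) by ring, ← _root_.map_smul, ← map_sub, ← smul_sub]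
      -- termwise nrm bound
      have hwb : ∀ i < n, ∀ᵐ ω ∂μ, nrm (T ((i:ℝ)*(r/n)) (rconst K μ (r/n) • (y - D (r/n)))) ω
          ≤ ξ ω * ((r/n) * nrm (D (r/n) - y) ω) := by
        intro i hi
        have hmem : (i:ℝ)*(r/n) ∈ Icc (0:ℝ) r := by
          constructor
          · positivity
          · have hin : (i:ℝ) ≤ (n:ℝ) := by exact_mod_cast hi.le
            calc (i:ℝ)*(r/n) ≤ (n:ℝ)*(r/n) :=
                mul_le_mul_of_nonneg_right hin hτ0.le
              _ = r := by field_simp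
        filter_upwards [hξ ((i:ℝ)*(r/n)) hmem (rconst K μ (r/n) • (y - D (r/n))),
          RNProofAux.ae_smul h (r/n) (y - D (r/n)),
          RNProofAux.ae_neg h (D (r/n) - y)] with ω e1 e2 e5
        rw [abs_of_pos hτ0] at e2
        have e6 : (y - D (r/n) : S) = -(D (r/n) - y) := (neg_sub _ _).symm
        calc nrm (T ((i:ℝ)*(r/n)) (rconst K μ (r/n) • (y - D (r/n)))) ω
            ≤ ξ ω * nrm (rconst K μ (r/n) • (y - D (r/n))) ω := e1
          _ = ξ ω * ((r/n) * nrm (y - D (r/n)) ω) := by rw [e2]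
          _ = ξ ω * ((r/n) * nrm (D (r/n) - y) ω) := by rw [e6, e5]
      have hsumb := RNProofAux.nrm_sum_le h
        (fun i : ℕ => T ((i:ℝ)*(r/n)) (rconst K μ (r/n) • (y - D (r/n))))
        (fun ω => ξ ω * ((r/n) * nrm (D (r/n) - y) ω)) n hwb
      filter_upwards [hsumb] with ω e1
      show nrm (rconst K μ (r/(n:ℝ)) • (∑ i ∈ Finset.range n, T ((i:ℝ) * r / (n:ℝ)) y)
          - (T r x - x)) ω ≤ (r * ξ ω) * nrm (D (r/n) - y) ω
      rw [hsumeq]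
      calc nrm (∑ i ∈ Finset.range n, T ((i:ℝ)*(r/n))
            (rconst K μ (r/n) • (y - D (r/n)))) ω
          ≤ (n:ℝ) * (ξ ω * ((r/n) * nrm (D (r/n) - y) ω)) := e1
        _ = ((n:ℝ) * (r/n)) * (ξ ω * nrm (D (r/n) - y) ω) := by ring
        _ = (r * ξ ω) * nrm (D (r/n) - y) ω := by
            rw [show ((n:ℝ)) * (r/n) = r by field_simp]
            ring
end
end

section
/- Define $f : [0,1] \to L^0(\mathfrak{B}[0,1], R)$ (with Lebesgue measure) by $f(t) = $ the equivalence class of the indicator $I_{(t,1]}$. Then $f$ is differentiable on $[0,1]$ in the $(\varepsilon,\lambda)$-topology with $f'(t) = 0$ for all $t$, yet $f(1) - f(0) = -1 \ne 0 = \int_0^1 f'(t)\,dt$; in particular the fundamental theorem of calculus fails for this non-$L^0$-Lipschitz function. -/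
/- Preamble: random normed modules over `L⁰(𝓕,K)`, the `(ε,λ)`-topology,
`C₀`-semigroups of continuous module homomorphisms and resolvents. -/

open MeasureTheory MeasureTheory.AEEqFun Filter Set
noncomputable section

open RNTheory

namespace Example316

/-- Lebesgue measure restricted to `[0,1]`, as the base probability space. -/
def μ01 : Measure ℝ := volume.restrict (Icc (0:ℝ) 1)

instance : IsProbabilityMeasure μ01 := ⟨by simp [μ01, Real.volume_Icc]⟩

/-- `f(t)` is the equivalence class of the indicator `I_{(t,1]}` in `L⁰(𝔅[0,1],ℝ)`. -/
def f (t : ℝ) : ℝ →ₘ[μ01] ℝ :=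
  AEEqFun.mk (Set.indicator (Ioc t 1) (fun _ => (1:ℝ)))
    ((measurable_const.indicator measurableSet_Ioc).aestronglyMeasurable)

lemma f_coe (t : ℝ) : ⇑(f t) =ᵐ[μ01] Set.indicator (Ioc t 1) (fun _ => (1:ℝ)) :=
  AEEqFun.coeFn_mk _ _

lemma vol_sing : μ01 {(0:ℝ)} = 0 := by
  have h : μ01 {(0:ℝ)} ≤ volume {(0:ℝ)} := by
    rw [μ01, Measure.restrict_apply (measurableSet_singleton 0)]
    exact measure_mono Set.inter_subset_left
  simpa using le_antisymm (h.trans (by simp)) zero_le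

lemma f_sub_const : f 1 - f 0 = AEEqFun.const ℝ (-1 : ℝ) := by
  apply AEEqFun.ext
  have hae : ∀ᵐ ω ∂μ01, ω ∈ Ioc (0:ℝ) 1 := by
    have hIcc : ∀ᵐ ω ∂μ01, ω ∈ Icc (0:ℝ) 1 := ae_restrict_mem measurableSet_Icc
    have h0' : ∀ᵐ ω ∂μ01, ω ≠ (0:ℝ) := by
      rw [ae_iff]
      convert vol_sing using 2
      ext ω; simp
    filter_upwards [hIcc, h0'] with ω h hne
    exact ⟨lt_of_le_of_ne h.1 (Ne.symm hne), h.2⟩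
  have mid : (fun ω => Set.indicator (Ioc (1:ℝ) 1) (fun _ => (1:ℝ)) ω -
      Set.indicator (Ioc (0:ℝ) 1) (fun _ => (1:ℝ)) ω) =ᵐ[μ01] (fun _ => (-1:ℝ)) :=
    hae.mono fun ω hm => by simp [Set.indicator_apply, Set.Ioc_self, hm]
  exact (AEEqFun.coeFn_sub _ _).trans ((((f_coe 1).sub (f_coe 0)).trans mid).trans
    (AEEqFun.coeFn_const _ _).symm)

/-- The map `f : [0,1] → L⁰(𝔅[0,1],ℝ)`, `f(t) = [I_{(t,1]}]`, is
differentiable in the `(ε,λ)`-topology with `f'(t) = 0` for all `t ∈ [0,1]`, yet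
`f(1) - f(0) = -1 ≠ 0 = ∫₀¹ f'(t) dt`; so the fundamental theorem of calculus fails for
this non-`L⁰`-Lipschitz function. -/
theorem ftc_fails_for_indicator_family :
    (∀ t ∈ Icc (0:ℝ) 1,
      Tendsto (fun s : ℝ => ((s - t)⁻¹ : ℝ) • (f s - f t))
        (nhdsWithin t (Icc (0:ℝ) 1 \ {t}))
        (@nhds (ℝ →ₘ[μ01] ℝ) (elTop (l0abs (K := ℝ))) 0)) ∧
    f 1 - f 0 = AEEqFun.const ℝ (-1 : ℝ) ∧
    f 1 - f 0 ≠ 0 := by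
  refine ⟨?_, f_sub_const, ?_⟩
  · intro t ht
    letI : TopologicalSpace (ℝ →ₘ[μ01] ℝ) := elTop (l0abs (K := ℝ))
    rw [tendsto_nhds]
    intro U hU hU0
    obtain ⟨ε, hε, lam, hlam0, hlam1, hN⟩ := hU 0 hU0
    have h1 : ∀ᶠ s in nhdsWithin t (Icc (0:ℝ) 1 \ {t}), |s - t| < lam :=
      eventually_nhdsWithin_of_eventually_nhds
        (Metric.eventually_nhds_iff.2 ⟨lam, hlam0, fun s hs => by rwa [Real.dist_eq] at hs⟩)
    filter_upwards [h1] with s hs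
    apply hN
    show (1:ℝ) - lam <
      (μ01 {ω | l0abs (((s - t)⁻¹ : ℝ) • (f s - f t) - 0) ω < ε}).toReal
    rw [sub_zero]
    set g : ℝ → ℝ := fun ω => (s - t)⁻¹ *
      (Set.indicator (Ioc s 1) (fun _ => (1:ℝ)) ω -
        Set.indicator (Ioc t 1) (fun _ => (1:ℝ)) ω) with hg
    have hsub : ⇑(f s - f t) =ᵐ[μ01] fun ω =>
        Set.indicator (Ioc s 1) (fun _ => (1:ℝ)) ω -
          Set.indicator (Ioc t 1) (fun _ => (1:ℝ)) ω :=
      (AEEqFun.coeFn_sub _ _).trans ((f_coe s).sub (f_coe t))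
    have hsmul : ⇑(((s - t)⁻¹ : ℝ) • (f s - f t)) =ᵐ[μ01] g :=
      (AEEqFun.coeFn_smul _ _).trans (hsub.mono fun ω h => by
        simp only [Pi.smul_apply, h, smul_eq_mul, hg])
    have habs : ⇑(l0abs (((s - t)⁻¹ : ℝ) • (f s - f t))) =ᵐ[μ01] fun ω => |g ω| :=
      (AEEqFun.coeFn_comp _ _ _).trans (hsmul.mono fun ω h => by
        simp only [Function.comp_apply, h, Real.norm_eq_abs])
    have hset : μ01 {ω | l0abs (((s - t)⁻¹ : ℝ) • (f s - f t)) ω < ε}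
        = μ01 {ω | |g ω| < ε} :=
      measure_congr (habs.mono fun ω h => by
        show (l0abs (((s - t)⁻¹ : ℝ) • (f s - f t)) ω < ε) = (|g ω| < ε)
        rw [h])
    set D : Set ℝ := Ioc (min s t) (max s t) with hD
    have hDc : Dᶜ ⊆ {ω | |g ω| < ε} := by
      intro ω hω
      have hω' : ω ≤ min s t ∨ max s t < ω := by
        by_contra hcon
        push_neg at hcon
        exact hω (Set.mem_Ioc.2 ⟨hcon.1, hcon.2⟩)
      have hind : Set.indicator (Ioc s 1) (fun _ => (1:ℝ)) ω =
          Set.indicator (Ioc t 1) (fun _ => (1:ℝ)) ω := by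
        rcases hω' with h | h
        · have h1 : ¬ s < ω := not_lt.2 (h.trans (min_le_left s t))
          have h2 : ¬ t < ω := not_lt.2 (h.trans (min_le_right s t))
          simp [Set.indicator_apply, Set.mem_Ioc, h1, h2]
        · have h1 : s < ω := lt_of_le_of_lt (le_max_left s t) h
          have h2 : t < ω := lt_of_le_of_lt (le_max_right s t) h
          simp [Set.indicator_apply, Set.mem_Ioc, h1, h2]
      show |g ω| < ε
      rw [hg]
      simp [hind, hε]
    have hDm : μ01 D ≤ ENNReal.ofReal |s - t| := by
      have h1 : μ01 D ≤ volume D := by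
        rw [μ01, Measure.restrict_apply measurableSet_Ioc]
        exact measure_mono Set.inter_subset_left
      calc μ01 D ≤ volume D := h1
        _ = ENNReal.ofReal (max s t - min s t) := Real.volume_Ioc
        _ = ENNReal.ofReal |s - t| := by rw [max_sub_min_eq_abs, abs_sub_comm]
    have hD1 : (μ01 D).toReal ≤ |s - t| := by
      have := ENNReal.toReal_mono ENNReal.ofReal_ne_top hDm
      rwa [ENNReal.toReal_ofReal (abs_nonneg _)] at this
    have hcompl : (μ01 Dᶜ).toReal ≤ (μ01 {ω | |g ω| < ε}).toReal :=
      ENNReal.toReal_mono (measure_ne_top _ _) (measure_mono hDc)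
    have hsum : (μ01 D).toReal + (μ01 Dᶜ).toReal = 1 := by
      rw [← ENNReal.toReal_add (measure_ne_top _ _) (measure_ne_top _ _),
        measure_add_measure_compl measurableSet_Ioc]
      simp
    rw [hset]
    linarith
  · intro h
    have hc : AEEqFun.const ℝ (-1:ℝ) = (0 : ℝ →ₘ[μ01] ℝ) := f_sub_const ▸ h
    have hae : (fun _ : ℝ => (-1:ℝ)) =ᵐ[μ01] (fun _ : ℝ => (0:ℝ)) :=
      (AEEqFun.coeFn_const ℝ (-1:ℝ)).symm.trans (hc ▸ AEEqFun.coeFn_zero)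
    rw [Filter.EventuallyEq, ae_iff] at hae
    have huniv : {a : ℝ | ¬ (-1:ℝ) = 0} = Set.univ := by
      ext a; simp
    rw [huniv] at hae
    simp at hae

end Example316
end
end

section
/- Let $A : D(A) \to S$ be a module homomorphism on a complete $RN$ module with $L^0_{++}(\mathcal{F}) \subset \rho(A)$, and suppose there is $M \in L^0_+(\mathcal{F})$, $M \ge 1$, such that $\|\xi^n R(\xi,A)^n\| \le M$ for all $n \in N$ and $\xi \in L^0_{++}(\mathcal{F})$. Then there exists an $L^0$-norm $|\cdot|$ on $S$, equivalent to $\|\cdot\|$, with $\|x\| \le |x| \le M\|x\|$ for all $x$ and $|\xi R(\xi,A)x| \le |x|$ for all $x \in S$, $\xi \in L^0_{++}(\mathcal{F})$. -/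
/- Preamble: random normed modules over `L⁰(𝓕,K)`, the `(ε,λ)`-topology,
`C₀`-semigroups of continuous module homomorphisms and resolvents. -/

open MeasureTheory MeasureTheory.AEEqFun Filter Set
noncomputable section

open RNTheory
namespace RenormAux
variable {Ω : Type*} [MeasurableSpace Ω] {μ : Measure Ω}

noncomputable def qsup (f : ℕ → Ω →ₘ[μ] ℝ) : Ω →ₘ[μ] ℝ :=
  AEEqFun.mk (fun ω => ⨆ n, ((f n).aestronglyMeasurable.aemeasurable.mk _) ω)
    (Measurable.aestronglyMeasurable
      (Measurable.iSup fun n => (f n).aestronglyMeasurable.aemeasurable.measurable_mk))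

theorem coeFn_qsup (f : ℕ → Ω →ₘ[μ] ℝ) :
    ⇑(qsup f) =ᵐ[μ] fun ω => ⨆ n, f n ω := by
  have h2 : ∀ᵐ ω ∂μ, ∀ n, f n ω = (f n).aestronglyMeasurable.aemeasurable.mk _ ω :=
    ae_all_iff.2 fun n => (f n).aestronglyMeasurable.aemeasurable.ae_eq_mk
  filter_upwards [AEEqFun.coeFn_mk _ (Measurable.aestronglyMeasurable
      (Measurable.iSup fun n => (f n).aestronglyMeasurable.aemeasurable.measurable_mk)), h2]
    with ω h1 h2'
  exact h1.trans (iSup_congr fun n => (h2' n).symm)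

theorem le_of_ae {f g : Ω →ₘ[μ] ℝ} (h : ∀ᵐ ω ∂μ, f ω ≤ g ω) : f ≤ g :=
  AEEqFun.coeFn_le.1 h

theorem ae_of_le {f g : Ω →ₘ[μ] ℝ} (h : f ≤ g) : ∀ᵐ ω ∂μ, f ω ≤ g ω :=
  AEEqFun.coeFn_le.2 h

theorem ae_nonneg {c : Ω →ₘ[μ] ℝ} (hc : 0 ≤ c) : ∀ᵐ ω ∂μ, 0 ≤ c ω := by
  filter_upwards [ae_of_le hc, AEEqFun.coeFn_zero (β := ℝ) (μ := μ)] with ω h1 h2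
  simpa [h2] using h1

theorem qsup_le {f : ℕ → Ω →ₘ[μ] ℝ} {g : Ω →ₘ[μ] ℝ} (h : ∀ n, f n ≤ g) :
    qsup f ≤ g := by
  refine le_of_ae ?_
  filter_upwards [coeFn_qsup f, ae_all_iff.2 fun n => ae_of_le (h n)] with ω h1 h2
  rw [h1]
  exact ciSup_le h2

theorem le_qsup {f : ℕ → Ω →ₘ[μ] ℝ} {g : Ω →ₘ[μ] ℝ} (h : ∀ n, f n ≤ g) (k : ℕ) :
    f k ≤ qsup f := by
  refine le_of_ae ?_
  filter_upwards [coeFn_qsup f, ae_all_iff.2 fun n => ae_of_le (h n)] with ω h1 h2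
  rw [h1]
  exact le_ciSup ⟨g ω, by rintro y ⟨n, rfl⟩; exact h2 n⟩ k

theorem qsup_mul {f : ℕ → Ω →ₘ[μ] ℝ} (c : Ω →ₘ[μ] ℝ) (hc : 0 ≤ c) :
    qsup (fun n => c * f n) = c * qsup f := by
  refine AEEqFun.ext ?_
  have hmul : ∀ᵐ ω ∂μ, ∀ n, (c * f n) ω = c ω * f n ω :=
    ae_all_iff.2 fun n => AEEqFun.coeFn_mul c (f n)
  filter_upwards [coeFn_qsup (fun n => c * f n), AEEqFun.coeFn_mul c (qsup f),
    coeFn_qsup f, hmul, ae_nonneg hc] with ω h1 h2 h3 h4 h5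
  rw [h1, h2, Pi.mul_apply, h3, Real.mul_iSup_of_nonneg h5]
  exact iSup_congr fun n => h4 n

end RenormAux
namespace RenormAux
open RNTheory

section
variable {Ω : Type*} [MeasurableSpace Ω] {μ : Measure Ω}

theorem coeFn_l0abs {K : Type*} [RCLike K] (ζ : Ω →ₘ[μ] K) :
    ⇑(l0abs ζ) =ᵐ[μ] fun ω => ‖ζ ω‖ :=
  AEEqFun.coeFn_comp _ _ _

theorem l0abs_nonneg {K : Type*} [RCLike K] (ζ : Ω →ₘ[μ] K) : 0 ≤ l0abs ζ := by
  refine le_of_ae ?_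
  filter_upwards [coeFn_l0abs ζ, AEEqFun.coeFn_zero (β := ℝ) (μ := μ)] with ω h1 h2
  simp [h1, h2, norm_nonneg]

theorem coeFn_l0ofReal (K : Type*) [RCLike K] (ξ : Ω →ₘ[μ] ℝ) :
    ⇑(l0ofReal K ξ) =ᵐ[μ] fun ω => (ξ ω : K) :=
  AEEqFun.coeFn_comp _ _ _

theorem mul_le_mul_l0 {a b c : Ω →ₘ[μ] ℝ} (hc : 0 ≤ c) (hab : a ≤ b) : c * a ≤ c * b := by
  refine le_of_ae ?_
  filter_upwards [AEEqFun.coeFn_mul c a, AEEqFun.coeFn_mul c b, ae_nonneg hc, ae_of_le hab]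
    with ω h1 h2 h3 h4
  rw [h1, h2]
  simp only [Pi.mul_apply]
  exact mul_le_mul_of_nonneg_left h4 h3

theorem add_le_add_l0 {a b a' b' : Ω →ₘ[μ] ℝ} (h1 : a ≤ a') (h2 : b ≤ b') :
    a + b ≤ a' + b' := by
  refine le_of_ae ?_
  filter_upwards [AEEqFun.coeFn_add a b, AEEqFun.coeFn_add a' b', ae_of_le h1, ae_of_le h2]
    with ω e1 e2 e3 e4
  rw [e1, e2]
  simp only [Pi.add_apply]
  exact add_le_add e3 e4

variable (K : Type*) [RCLike K] {S : Type*} [AddCommGroup S] [Module (Ω →ₘ[μ] K) S]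

noncomputable def NrmAux (nrm : S → Ω →ₘ[μ] ℝ) (ξ : Ω →ₘ[μ] ℝ)
    (R : S →ₗ[Ω →ₘ[μ] K] S) (x : S) : Ω →ₘ[μ] ℝ :=
  qsup fun m => nrm (((l0ofReal K ξ • R : Module.End (Ω →ₘ[μ] K) S) ^ m) x)

variable {nrm : S → Ω →ₘ[μ] ℝ} {M : Ω →ₘ[μ] ℝ} {ξ : Ω →ₘ[μ] ℝ} {R : S →ₗ[Ω →ₘ[μ] K] S}

theorem nrm_le_NrmAux
    (hb : ∀ (m : ℕ) (y : S),
      nrm (((l0ofReal K ξ • R : Module.End (Ω →ₘ[μ] K) S) ^ m) y) ≤ M * nrm y)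
    (x : S) : nrm x ≤ NrmAux K nrm ξ R x := by
  have h0 := le_qsup
    (f := fun m => nrm (((l0ofReal K ξ • R : Module.End (Ω →ₘ[μ] K) S) ^ m) x))
    (g := M * nrm x) (fun m => hb m x) 0
  simpa [NrmAux] using h0

theorem NrmAux_le
    (hb : ∀ (m : ℕ) (y : S),
      nrm (((l0ofReal K ξ • R : Module.End (Ω →ₘ[μ] K) S) ^ m) y) ≤ M * nrm y)
    (x : S) : NrmAux K nrm ξ R x ≤ M * nrm x :=
  qsup_le fun m => hb m x

theorem NrmAux_smul (h : IsRNNorm K nrm) (ζ : Ω →ₘ[μ] K) (x : S) :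
    NrmAux K nrm ξ R (ζ • x) = l0abs ζ * NrmAux K nrm ξ R x := by
  unfold NrmAux
  rw [show (fun m => nrm (((l0ofReal K ξ • R : Module.End (Ω →ₘ[μ] K) S) ^ m) (ζ • x)))
      = fun m => l0abs ζ * nrm (((l0ofReal K ξ • R : Module.End (Ω →ₘ[μ] K) S) ^ m) x) from
    funext fun m => by rw [_root_.map_smul, h.smul_eq]]
  exact qsup_mul _ (l0abs_nonneg ζ)

theorem NrmAux_add (h : IsRNNorm K nrm)
    (hb : ∀ (m : ℕ) (y : S),
      nrm (((l0ofReal K ξ • R : Module.End (Ω →ₘ[μ] K) S) ^ m) y) ≤ M * nrm y)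
    (x y : S) : NrmAux K nrm ξ R (x + y) ≤ NrmAux K nrm ξ R x + NrmAux K nrm ξ R y := by
  refine qsup_le fun m => ?_
  have h1 : nrm (((l0ofReal K ξ • R : Module.End (Ω →ₘ[μ] K) S) ^ m) (x + y))
      ≤ nrm (((l0ofReal K ξ • R : Module.End (Ω →ₘ[μ] K) S) ^ m) x)
        + nrm (((l0ofReal K ξ • R : Module.End (Ω →ₘ[μ] K) S) ^ m) y) := by
    rw [map_add]; exact h.add_le _ _
  exact h1.trans (add_le_add_l0 (le_qsup (fun j => hb j x) m) (le_qsup (fun j => hb j y) m))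

theorem NrmAux_shift
    (hb : ∀ (m : ℕ) (y : S),
      nrm (((l0ofReal K ξ • R : Module.End (Ω →ₘ[μ] K) S) ^ m) y) ≤ M * nrm y)
    (z : S) : NrmAux K nrm ξ R (l0ofReal K ξ • R z) ≤ NrmAux K nrm ξ R z := by
  refine qsup_le fun m => ?_
  have e1 : ((l0ofReal K ξ • R : Module.End (Ω →ₘ[μ] K) S) ^ m) (l0ofReal K ξ • R z)
      = ((l0ofReal K ξ • R : Module.End (Ω →ₘ[μ] K) S) ^ (m + 1)) z := by
    rw [pow_succ, Module.End.mul_apply]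
    rfl
  rw [e1]
  exact le_qsup (fun j => hb j z) (m + 1)

theorem res_diff {p : Submodule (Ω →ₘ[μ] K) S} {A : p →ₗ[Ω →ₘ[μ] K] S}
    {ξ' ζ' : Ω →ₘ[μ] K} {Rξ Rζ : S →ₗ[Ω →ₘ[μ] K] S}
    (hξ : IsResolvent K nrm p A ξ' Rξ) (hζ : IsResolvent K nrm p A ζ' Rζ) (x : S) :
    Rζ x = Rξ x + (ξ' - ζ') • Rξ (Rζ x) := by
  have h1 := hξ.left_inv ⟨Rζ x, hζ.mem x⟩
  have h3 := hζ.right_inv x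
  have h2 : ξ' • Rζ x - A ⟨Rζ x, hζ.mem x⟩
      = (ξ' - ζ') • Rζ x + (ζ' • Rζ x - A ⟨Rζ x, hζ.mem x⟩) := by
    rw [sub_smul]
    abel
  rw [h3] at h2
  rw [Submodule.coe_mk] at h1
  rw [h2, map_add, LinearMap.map_smul] at h1
  exact h1.symm.trans (add_comm _ _)

theorem NrmAux_contr (h : IsRNNorm K nrm) {p : Submodule (Ω →ₘ[μ] K) S}
    {A : p →ₗ[Ω →ₘ[μ] K] S} {ζ : Ω →ₘ[μ] ℝ} {Rζ : S →ₗ[Ω →ₘ[μ] K] S}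
    (hξres : IsResolvent K nrm p A (l0ofReal K ξ) R)
    (hζres : IsResolvent K nrm p A (l0ofReal K ζ) Rζ)
    (hpζ : L0pos ζ) (hle : ζ ≤ ξ)
    (hb : ∀ (m : ℕ) (y : S),
      nrm (((l0ofReal K ξ • R : Module.End (Ω →ₘ[μ] K) S) ^ m) y) ≤ M * nrm y)
    (x : S) :
    NrmAux K nrm ξ R (l0ofReal K ζ • Rζ x) ≤ NrmAux K nrm ξ R x := by
  have hd := res_diff K hξres hζres x
  have hRy : l0ofReal K ζ • R (Rζ x) = R (l0ofReal K ζ • Rζ x) :=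
    (LinearMap.map_smul R _ _).symm
  have hid : l0ofReal K ξ • (l0ofReal K ζ • Rζ x)
      = l0ofReal K ζ • (l0ofReal K ξ • R x)
        + (l0ofReal K ξ - l0ofReal K ζ) • (l0ofReal K ξ • (l0ofReal K ζ • R (Rζ x))) := by
    conv_lhs => rw [hd]
    module
  have hkey : l0abs (l0ofReal K ξ) * NrmAux K nrm ξ R (l0ofReal K ζ • Rζ x)
      ≤ l0abs (l0ofReal K ζ) * NrmAux K nrm ξ R x
        + l0abs (l0ofReal K ξ - l0ofReal K ζ)
            * NrmAux K nrm ξ R (l0ofReal K ζ • Rζ x) := by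
    rw [← NrmAux_smul K h, hid]
    refine (NrmAux_add K h hb _ _).trans ?_
    rw [NrmAux_smul K h (l0ofReal K ζ) (l0ofReal K ξ • R x),
      NrmAux_smul K h (l0ofReal K ξ - l0ofReal K ζ)
        (l0ofReal K ξ • (l0ofReal K ζ • R (Rζ x)))]
    refine add_le_add_l0 ?_ ?_
    · exact mul_le_mul_l0 (l0abs_nonneg _) (NrmAux_shift K hb x)
    · refine mul_le_mul_l0 (l0abs_nonneg _) ?_
      rw [hRy]
      exact NrmAux_shift K hb _
  refine le_of_ae ?_
  set a := NrmAux K nrm ξ R (l0ofReal K ζ • Rζ x) with ha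
  set b := NrmAux K nrm ξ R x with hb2
  filter_upwards [ae_of_le hkey, AEEqFun.coeFn_mul (l0abs (l0ofReal K ξ)) a,
    AEEqFun.coeFn_mul (l0abs (l0ofReal K ζ)) b,
    AEEqFun.coeFn_mul (l0abs (l0ofReal K ξ - l0ofReal K ζ)) a,
    AEEqFun.coeFn_add (l0abs (l0ofReal K ζ) * b)
      (l0abs (l0ofReal K ξ - l0ofReal K ζ) * a),
    coeFn_l0abs (l0ofReal K ξ), coeFn_l0abs (l0ofReal K ζ),
    coeFn_l0abs (l0ofReal K ξ - l0ofReal K ζ),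
    coeFn_l0ofReal K ξ, coeFn_l0ofReal K ζ,
    AEEqFun.coeFn_sub (l0ofReal K ξ) (l0ofReal K ζ),
    hpζ, ae_of_le hle] with ω e0 e1 e2 e3 e4 e5 e6 e7 e8 e9 e10 e11 e12
  rw [e4, Pi.add_apply, e1, e2, e3, Pi.mul_apply, Pi.mul_apply, Pi.mul_apply,
    e5, e6, e7, e8, e9, e10, Pi.sub_apply, e8, e9] at e0
  have hnormξ : ‖(↑(ξ ω) : K)‖ = ξ ω := by
    rw [RCLike.norm_ofReal]
    exact abs_of_pos (lt_of_lt_of_le e11 e12)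
  have hnormζ : ‖(↑(ζ ω) : K)‖ = ζ ω := by
    rw [RCLike.norm_ofReal]
    exact abs_of_pos e11
  have hnormd : ‖(↑(ξ ω) : K) - (↑(ζ ω) : K)‖ = ξ ω - ζ ω := by
    rw [← RCLike.ofReal_sub, RCLike.norm_ofReal]
    exact abs_of_nonneg (sub_nonneg.2 e12)
  rw [hnormξ, hnormζ, hnormd] at e0
  have h5 : ζ ω * a ω ≤ ζ ω * b ω := by nlinarith
  exact le_of_mul_le_mul_left h5 e11

theorem NrmAux_mono (h : IsRNNorm K nrm) {p : Submodule (Ω →ₘ[μ] K) S}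
    {A : p →ₗ[Ω →ₘ[μ] K] S} {ζ : Ω →ₘ[μ] ℝ} {Rζ : S →ₗ[Ω →ₘ[μ] K] S}
    (hξres : IsResolvent K nrm p A (l0ofReal K ξ) R)
    (hζres : IsResolvent K nrm p A (l0ofReal K ζ) Rζ)
    (hpζ : L0pos ζ) (hle : ζ ≤ ξ)
    (hbξ : ∀ (m : ℕ) (y : S),
      nrm (((l0ofReal K ξ • R : Module.End (Ω →ₘ[μ] K) S) ^ m) y) ≤ M * nrm y)
    (x : S) :
    NrmAux K nrm ζ Rζ x ≤ NrmAux K nrm ξ R x := by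
  have claim : ∀ (m : ℕ) (z : S),
      NrmAux K nrm ξ R (((l0ofReal K ζ • Rζ : Module.End (Ω →ₘ[μ] K) S) ^ m) z)
        ≤ NrmAux K nrm ξ R z := by
    intro m
    induction m with
    | zero => intro z; simp
    | succ n ih =>
      intro z
      have e1 : ((l0ofReal K ζ • Rζ : Module.End (Ω →ₘ[μ] K) S) ^ (n + 1)) z
          = ((l0ofReal K ζ • Rζ : Module.End (Ω →ₘ[μ] K) S) ^ n) (l0ofReal K ζ • Rζ z) := by
        rw [pow_succ, Module.End.mul_apply]
        rfl
      rw [e1]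
      exact (ih _).trans (NrmAux_contr K h hξres hζres hpζ hle hbξ z)
  exact qsup_le fun m => (nrm_le_NrmAux K hbξ _).trans (claim m x)

noncomputable def Nrm' (nrm : S → Ω →ₘ[μ] ℝ) (c : ℕ → Ω →ₘ[μ] ℝ)
    (Rc : ℕ → S →ₗ[Ω →ₘ[μ] K] S) (x : S) : Ω →ₘ[μ] ℝ :=
  qsup fun k => NrmAux K nrm (c k) (Rc k) x

end
end RenormAux
open RenormAux

/-- Let `A : D(A) → S` be a module homomorphism on a complete `RN` module
with `L⁰₊₊(𝓕) ⊆ ρ(A)` and suppose `M ∈ L⁰₊(𝓕)`, `M ≥ 1`, satisfies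
`‖ξⁿ R(ξ,A)ⁿ‖ ≤ M` for all `n ∈ ℕ` and `ξ ∈ L⁰₊₊(𝓕)`. Then there is an `L⁰`-norm `|·|`
on `S`, equivalent to `‖·‖`, with `‖x‖ ≤ |x| ≤ M‖x‖` for all `x` and
`|ξ R(ξ,A) x| ≤ |x|` for all `x ∈ S`, `ξ ∈ L⁰₊₊(𝓕)`. -/
theorem renorming_lemma
    {Ω : Type*} [MeasurableSpace Ω] (μ : Measure Ω) [IsProbabilityMeasure μ]
    (K : Type*) [RCLike K] {S : Type*} [AddCommGroup S] [Module (Ω →ₘ[μ] K) S]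
    (nrm : S → Ω →ₘ[μ] ℝ) (h : IsRNNorm K nrm) (hcomplete : IsCompleteRN nrm)
    (p : Submodule (Ω →ₘ[μ] K) S) (A : p →ₗ[Ω →ₘ[μ] K] S)
    (M : Ω →ₘ[μ] ℝ) (hM0 : 0 ≤ M) (hM1 : 1 ≤ M)
    (hres : ∀ ξ : Ω →ₘ[μ] ℝ, L0pos ξ → ∃ R, IsResolvent K nrm p A (l0ofReal K ξ) R)
    (hpow : ∀ (ξ : Ω →ₘ[μ] ℝ) (R : S →ₗ[Ω →ₘ[μ] K] S), L0pos ξ →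
      IsResolvent K nrm p A (l0ofReal K ξ) R → ∀ (n : ℕ) (x : S),
        nrm (((l0ofReal K ξ • R : Module.End (Ω →ₘ[μ] K) S) ^ n) x) ≤ M * nrm x) :
    ∃ nrm' : S → Ω →ₘ[μ] ℝ, IsRNNorm K nrm' ∧
      (∀ x, nrm x ≤ nrm' x ∧ nrm' x ≤ M * nrm x) ∧
      (∀ (ξ : Ω →ₘ[μ] ℝ) (R : S →ₗ[Ω →ₘ[μ] K] S), L0pos ξ →
        IsResolvent K nrm p A (l0ofReal K ξ) R → ∀ x,
          nrm' (l0ofReal K ξ • R x) ≤ nrm' x) := by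
  classical
  set c : ℕ → Ω →ₘ[μ] ℝ := fun k => AEEqFun.const Ω ((k : ℝ) + 1) with hcdef
  have hcco : ∀ k : ℕ, ⇑(c k) =ᵐ[μ] Function.const Ω ((k : ℝ) + 1) := fun k =>
    AEEqFun.coeFn_const (α := Ω) (μ := μ) ((k : ℝ) + 1)
  have hcpos : ∀ k : ℕ, L0pos (c k) := by
    intro k
    filter_upwards [hcco k] with ω hω
    rw [hω]
    simp only [Function.const_apply]
    positivity
  have hcle : ∀ {j k : ℕ}, j ≤ k → c j ≤ c k := by
    intro j k hjk
    refine le_of_ae ?_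
    filter_upwards [hcco j, hcco k] with ω h1 h2
    rw [h1, h2]
    simp only [Function.const_apply]
    have : (j : ℝ) ≤ k := Nat.cast_le.2 hjk
    linarith
  choose Rc hRc using fun k => hres (c k) (hcpos k)
  have hbc : ∀ k (m : ℕ) (y : S),
      nrm (((l0ofReal K (c k) • Rc k : Module.End (Ω →ₘ[μ] K) S) ^ m) y) ≤ M * nrm y :=
    fun k => hpow (c k) (Rc k) (hcpos k) (hRc k)
  have hNle : ∀ (x : S) k, NrmAux K nrm (c k) (Rc k) x ≤ M * nrm x :=
    fun x k => NrmAux_le K (hbc k) x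
  have hleN : ∀ (x : S) k, NrmAux K nrm (c k) (Rc k) x ≤ Nrm' K nrm c Rc x :=
    fun x k => le_qsup (hNle x) k
  have hmono : ∀ x, nrm x ≤ Nrm' K nrm c Rc x :=
    fun x => (nrm_le_NrmAux K (hbc 0) x).trans (hleN x 0)
  have hub : ∀ x, Nrm' K nrm c Rc x ≤ M * nrm x := fun x => qsup_le (hNle x)
  have hsmul' : ∀ (ζ : Ω →ₘ[μ] K) (x : S),
      Nrm' K nrm c Rc (ζ • x) = l0abs ζ * Nrm' K nrm c Rc x := by
    intro ζ x
    have e : Nrm' K nrm c Rc (ζ • x)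
        = qsup (fun k => l0abs ζ * NrmAux K nrm (c k) (Rc k) x) :=
      congrArg qsup (funext fun k => NrmAux_smul K h ζ x)
    rw [e, qsup_mul _ (l0abs_nonneg ζ)]
    rfl
  refine ⟨Nrm' K nrm c Rc, ⟨?_, hsmul', ?_, ?_⟩, fun x => ⟨hmono x, hub x⟩, ?_⟩
  · exact fun x => (h.nonneg x).trans (hmono x)
  · intro x y
    refine qsup_le fun k => ?_
    exact (NrmAux_add K h (hbc k) x y).trans (add_le_add_l0 (hleN x k) (hleN y k))
  · intro x hx
    exact h.definite x (le_antisymm ((hmono x).trans hx.le) (h.nonneg x))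
  · intro ξ R hpos hRres x
    have hξm : AEMeasurable ξ μ := ξ.aestronglyMeasurable.aemeasurable
    set Ek : ℕ → Set Ω := fun k => {ω | hξm.mk ⇑ξ ω ≤ (k : ℝ) + 1} with hEkdef
    have hEkmeas : ∀ k, MeasurableSet (Ek k) :=
      fun k => measurableSet_le hξm.measurable_mk measurable_const
    set ind : ℕ → Ω →ₘ[μ] ℝ := fun k =>
      AEEqFun.mk ((Ek k).indicator fun _ => (1 : ℝ))
        ((measurable_const.indicator (hEkmeas k)).aestronglyMeasurable) with hinddef
    have hindco : ∀ k, ⇑(ind k) =ᵐ[μ] (Ek k).indicator fun _ => (1 : ℝ) :=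
      fun k => AEEqFun.coeFn_mk _ _
    set ee : ℕ → Ω →ₘ[μ] K := fun k => l0ofReal K (ind k) with heedef
    set za : ℕ → Ω →ₘ[μ] ℝ := fun k => ξ ⊓ c k with hzadef
    have hzapos : ∀ k, L0pos (za k) := by
      intro k
      filter_upwards [hpos, AEEqFun.coeFn_inf ξ (c k), hcco k] with ω h1 h2 h3
      show 0 < (ξ ⊓ c k) ω
      rw [h2, h3]
      simp only [Function.const_apply]
      have : (0 : ℝ) < (k : ℝ) + 1 := by positivity
      exact lt_inf_iff.2 ⟨h1, this⟩
    choose Rz hRz using fun k => hres (za k) (hzapos k)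
    -- (i) the idempotent kills ξ - za k
    have hekz : ∀ k, ee k * (l0ofReal K ξ - l0ofReal K (za k)) = 0 := by
      intro k
      refine AEEqFun.ext ?_
      filter_upwards [AEEqFun.coeFn_mul (ee k) (l0ofReal K ξ - l0ofReal K (za k)),
        AEEqFun.coeFn_sub (l0ofReal K ξ) (l0ofReal K (za k)),
        coeFn_l0ofReal K ξ, coeFn_l0ofReal K (za k), coeFn_l0ofReal K (ind k),
        hindco k, AEEqFun.coeFn_inf ξ (c k), hcco k, hξm.ae_eq_mk,
        AEEqFun.coeFn_zero (β := K) (μ := μ)] with ω e1 e2 e3 e4 e5 e6 e7 e8 e9 e10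
      rw [e1, Pi.mul_apply, e2, Pi.sub_apply, e3, e4, e10]
      show (ee k) ω * ((↑(ξ ω) : K) - ↑((za k) ω)) = (0 : Ω → K) ω
      rw [heedef]
      simp only []
      rw [e5, e6]
      by_cases hc : ω ∈ Ek k
      · have hz : (za k) ω = ξ ω := by
          show (ξ ⊓ c k) ω = ξ ω
          rw [e7, e8]
          simp only [Function.const_apply]
          refine inf_eq_left.2 ?_
          have : hξm.mk ⇑ξ ω ≤ (k : ℝ) + 1 := hc
          rw [e9]
          exact this
        rw [hz]
        simp
      · rw [Set.indicator_of_notMem hc]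
        simp
    have hscal : ∀ k, ee k * l0ofReal K ξ = ee k * l0ofReal K (za k) := by
      intro k
      have h0 := hekz k
      rw [mul_sub] at h0
      exact sub_eq_zero.1 h0
    -- (ii) localization of the resolvent
    have hkey : ∀ k, ee k • (l0ofReal K ξ • R x)
        = ee k • (l0ofReal K (za k) • Rz k x) := by
      intro k
      have hd := res_diff K hRres (hRz k) x
      rw [smul_smul, smul_smul, hscal k, hd,
        smul_add (ee k * l0ofReal K (za k)) (R x)
          ((l0ofReal K ξ - l0ofReal K (za k)) • R (Rz k x)), smul_smul]
      have hz : ee k * l0ofReal K (za k) * (l0ofReal K ξ - l0ofReal K (za k)) = 0 := by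
        have : ee k * l0ofReal K (za k) * (l0ofReal K ξ - l0ofReal K (za k))
            = l0ofReal K (za k) * (ee k * (l0ofReal K ξ - l0ofReal K (za k))) := by ring
        rw [this, hekz k, mul_zero]
      rw [hz, zero_smul (Ω →ₘ[μ] K) (R (Rz k x)), add_zero]
    -- (iii) contraction for the localized resolvents
    have hcontr : ∀ k, Nrm' K nrm c Rc (l0ofReal K (za k) • Rz k x) ≤ Nrm' K nrm c Rc x := by
      intro k
      refine qsup_le fun j => ?_
      have h1 : NrmAux K nrm (c j) (Rc j) (l0ofReal K (za k) • Rz k x)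
          ≤ NrmAux K nrm (c (max j k)) (Rc (max j k)) (l0ofReal K (za k) • Rz k x) :=
        NrmAux_mono K h (hRc (max j k)) (hRc j) (hcpos j) (hcle (le_max_left j k))
          (hbc (max j k)) _
      have h2 : NrmAux K nrm (c (max j k)) (Rc (max j k)) (l0ofReal K (za k) • Rz k x)
          ≤ NrmAux K nrm (c (max j k)) (Rc (max j k)) x :=
        NrmAux_contr K h (hRc (max j k)) (hRz k) (hzapos k)
          (le_trans inf_le_right (hcle (le_max_right j k))) (hbc (max j k)) x
      exact (h1.trans h2).trans (hleN x (max j k))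
    have heq : ∀ k, l0abs (ee k) * Nrm' K nrm c Rc (l0ofReal K ξ • R x)
        = l0abs (ee k) * Nrm' K nrm c Rc (l0ofReal K (za k) • Rz k x) := by
      intro k
      rw [← hsmul' (ee k) (l0ofReal K ξ • R x),
        ← hsmul' (ee k) (l0ofReal K (za k) • Rz k x), hkey k]
    -- (iv) pointwise conclusion
    refine le_of_ae ?_
    have hper : ∀ k : ℕ, ∀ᵐ ω ∂μ,
        ((l0abs (ee k) * Nrm' K nrm c Rc (l0ofReal K ξ • R x)) ω
          = l0abs (ee k) ω * (Nrm' K nrm c Rc (l0ofReal K ξ • R x)) ω)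
        ∧ ((l0abs (ee k) * Nrm' K nrm c Rc (l0ofReal K (za k) • Rz k x)) ω
          = l0abs (ee k) ω * (Nrm' K nrm c Rc (l0ofReal K (za k) • Rz k x)) ω)
        ∧ (l0abs (ee k) ω = ‖(ee k) ω‖)
        ∧ ((ee k) ω = ((ind k ω : ℝ) : K))
        ∧ (ind k ω = (Ek k).indicator (fun _ => (1 : ℝ)) ω)
        ∧ ((Nrm' K nrm c Rc (l0ofReal K (za k) • Rz k x)) ω ≤ (Nrm' K nrm c Rc x) ω) := by
      intro k
      filter_upwards [AEEqFun.coeFn_mul (l0abs (ee k)) (Nrm' K nrm c Rc (l0ofReal K ξ • R x)),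
        AEEqFun.coeFn_mul (l0abs (ee k)) (Nrm' K nrm c Rc (l0ofReal K (za k) • Rz k x)),
        coeFn_l0abs (ee k), coeFn_l0ofReal K (ind k), hindco k,
        ae_of_le (hcontr k)] with ω a1 a2 a3 a4 a5 a6
      exact ⟨by rw [a1]; rfl, by rw [a2]; rfl, a3, a4, a5, a6⟩
    filter_upwards [ae_all_iff.2 hper] with ω hk
    set k := ⌈hξm.mk ⇑ξ ω⌉₊ with hkdef
    obtain ⟨E1, E2, E3, E4, E5, E6⟩ := hk k
    have hmem : ω ∈ Ek k := by
      show hξm.mk ⇑ξ ω ≤ (k : ℝ) + 1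
      have h0 := Nat.le_ceil (hξm.mk ⇑ξ ω)
      rw [hkdef]
      linarith
    have hind1 : ind k ω = 1 := by
      rw [E5]
      exact Set.indicator_of_mem hmem _
    have habs1 : l0abs (ee k) ω = 1 := by
      rw [E3, E4, hind1]
      simp
    calc (Nrm' K nrm c Rc (l0ofReal K ξ • R x)) ω
        = 1 * (Nrm' K nrm c Rc (l0ofReal K ξ • R x)) ω := (one_mul _).symm
      _ = l0abs (ee k) ω * (Nrm' K nrm c Rc (l0ofReal K ξ • R x)) ω := by rw [habs1]
      _ = (l0abs (ee k) * Nrm' K nrm c Rc (l0ofReal K ξ • R x)) ω := E1.symm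
      _ = (l0abs (ee k) * Nrm' K nrm c Rc (l0ofReal K (za k) • Rz k x)) ω := by rw [heq k]
      _ = l0abs (ee k) ω * (Nrm' K nrm c Rc (l0ofReal K (za k) • Rz k x)) ω := E2
      _ = 1 * (Nrm' K nrm c Rc (l0ofReal K (za k) • Rz k x)) ω := by rw [habs1]
      _ = (Nrm' K nrm c Rc (l0ofReal K (za k) • Rz k x)) ω := one_mul _
      _ ≤ (Nrm' K nrm c Rc x) ω := E6
end
end
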